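/- Let E = EuclideanSpace ℝ (Fin p), let β₀ ∈ E, d > 0, c₀ > 0, and let μ : E → E be differentiable on the closed ball B̄(β₀, d) with ⟪(fderiv ℝ μ x) u, u⟫ ≥ c₀ ‖u‖² for every x ∈ B̄(β₀, d) and every u ∈ E. Assume additionally that for every u ∈ E with ‖u‖ = 1, the function t ↦ ⟪μ(β₀ + t • u), u⟫ is monotone nondecreasing on [0, ∞). Then for every b ∈ E with ‖b − β₀‖ ≥ d, ‖μ(b) − μ(β₀)‖ ≥ c₀ d. -/

import Mathlib

open Metric RealInnerProductSpace

/-- Separation bound outside the ball: if `μ` is differentiable on `B̄(β₀, d)` with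
`⟪(fderiv ℝ μ x) u, u⟫ ≥ c₀ ‖u‖²` there, and `t ↦ ⟪μ(β₀ + t u), u⟫` is nondecreasing
on `[0, ∞)` for every unit vector `u`, then `‖μ(b) − μ(β₀)‖ ≥ c₀ d` for every `b`
with `‖b − β₀‖ ≥ d`. -/
theorem separation_outside_ball
    {p : ℕ} (β₀ : EuclideanSpace ℝ (Fin p)) (d c₀ : ℝ) (hd : 0 < d) (hc₀ : 0 < c₀)
    (μ : EuclideanSpace ℝ (Fin p) → EuclideanSpace ℝ (Fin p))
    (hdiff : ∀ x ∈ closedBall β₀ d, DifferentiableAt ℝ μ x)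
    (hlb : ∀ x ∈ closedBall β₀ d, ∀ u : EuclideanSpace ℝ (Fin p),
      c₀ * ‖u‖ ^ 2 ≤ ⟪(fderiv ℝ μ x) u, u⟫)
    (hmono : ∀ u : EuclideanSpace ℝ (Fin p), ‖u‖ = 1 →
      MonotoneOn (fun t : ℝ => ⟪μ (β₀ + t • u), u⟫) (Set.Ici 0)) :
    ∀ b : EuclideanSpace ℝ (Fin p), d ≤ ‖b - β₀‖ → c₀ * d ≤ ‖μ b - μ β₀‖ := by
  intro b hb
  have hT0 : (0:ℝ) < ‖b - β₀‖ := lt_of_lt_of_le hd hb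
  set T := ‖b - β₀‖ with hT
  set u : EuclideanSpace ℝ (Fin p) := T⁻¹ • (b - β₀) with hu_def
  have hu : ‖u‖ = 1 := by
    rw [hu_def, norm_smul, norm_inv, Real.norm_eq_abs, abs_of_pos hT0]
    field_simp
    exact hT.symm
  have hTu : β₀ + T • u = b := by
    rw [hu_def, smul_smul, mul_inv_cancel₀ (ne_of_gt hT0), one_smul]
    abel
  set g : ℝ → ℝ := fun t => ⟪μ (β₀ + t • u), u⟫ with hg
  have hderiv : ∀ t ∈ Set.Icc (0:ℝ) d,
      HasDerivAt g ⟪(fderiv ℝ μ (β₀ + t • u)) u, u⟫ t := by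
    intro t ht
    have hx : β₀ + t • u ∈ closedBall β₀ d := by
      rw [mem_closedBall, dist_eq_norm]
      simp only [add_sub_cancel_left, norm_smul, hu, mul_one, Real.norm_eq_abs,
        abs_of_nonneg ht.1]
      exact ht.2
    have h1 : HasDerivAt (fun t : ℝ => β₀ + t • u) u t := by
      simpa using ((hasDerivAt_id t).smul_const u).const_add β₀
    have h2 := (hdiff _ hx).hasFDerivAt.comp_hasDerivAt t h1
    have h3 := h2.inner ℝ (hasDerivAt_const t u)
    simpa using h3
  have hcont : ContinuousOn g (Set.Icc 0 d) := fun t ht =>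
    ((hderiv t ht).continuousAt).continuousWithinAt
  have hd' : ∀ x ∈ interior (Set.Icc (0:ℝ) d), c₀ ≤ deriv g x := by
    intro t ht
    rw [interior_Icc] at ht
    have ht' : t ∈ Set.Icc (0:ℝ) d := ⟨le_of_lt ht.1, le_of_lt ht.2⟩
    rw [(hderiv t ht').deriv]
    have hx : β₀ + t • u ∈ closedBall β₀ d := by
      rw [mem_closedBall, dist_eq_norm]
      simp only [add_sub_cancel_left, norm_smul, hu, mul_one, Real.norm_eq_abs,
        abs_of_nonneg ht'.1]
      exact ht'.2
    have := hlb _ hx u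
    rwa [hu, one_pow, mul_one] at this
  have hkey : c₀ * (d - 0) ≤ g d - g 0 :=
    (convex_Icc 0 d).mul_sub_le_image_sub_of_le_deriv hcont
      (fun t ht => (hderiv t (interior_subset ht)).differentiableAt.differentiableWithinAt)
      hd' 0 ⟨le_refl 0, le_of_lt hd⟩ d ⟨le_of_lt hd, le_refl d⟩ (le_of_lt hd)
  have hmono' : g d ≤ g T :=
    hmono u hu (Set.mem_Ici.2 (le_of_lt hd)) (Set.mem_Ici.2 (le_trans (le_of_lt hd) hb)) hb
  have hg0 : g 0 = ⟪μ β₀, u⟫ := by simp [hg]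
  have hgT : g T = ⟪μ b, u⟫ := by rw [hg]; simp only [hTu]
  have hfin : c₀ * d ≤ ⟪μ b - μ β₀, u⟫ := by
    rw [inner_sub_left, ← hgT, ← hg0]
    linarith
  calc c₀ * d ≤ ⟪μ b - μ β₀, u⟫ := hfin
    _ ≤ ‖μ b - μ β₀‖ * ‖u‖ := real_inner_le_norm _ _
    _ = ‖μ b - μ β₀‖ := by rw [hu, mul_one]
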